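/- If P is a v-partition (a maximal family of pairwise incompatible members of V*), then the complement ∏X_i ∖ ⋃P belongs to d⁰(V*). -/
import Mathlib


open Set Cardinal

/-- The set of branches of the trimmed tree `T[A,α]`:
all `β` agreeing with `α` outside of `A`. -/
def branches (X : ℕ → Type) (A : Set ℕ) (α : ∀ i, X i) : Set (∀ i, X i) :=
  {β | ∀ n ∉ A, β n = α n}

/-- The family `V` of branch sets of trimmed trees. -/
def treeV (X : ℕ → Type) : Set (Set (∀ i, X i)) :=
  {S | ∃ A α, A.Infinite ∧ S = branches X A α}

/-- `[T]*`: all `β` agreeing with `α` outside of `A`, up to finitely many exceptions. -/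
def starBranches (X : ℕ → Type) (A : Set ℕ) (α : ∀ i, X i) : Set (∀ i, X i) :=
  {β | {n | n ∉ A ∧ β n ≠ α n}.Finite}

/-- The family `V*`. -/
def treeVstar (X : ℕ → Type) : Set (Set (∀ i, X i)) :=
  {S | ∃ A α, A.Infinite ∧ S = starBranches X A α}

/-- The ideal `d⁰(F)`. -/
def d0 {X : ℕ → Type} (F : Set (Set (∀ i, X i))) : Set (Set (∀ i, X i)) :=
  {Y | ∀ W ∈ F, ∃ U ∈ F, U ⊆ W ∧ U ∩ Y = ∅}

/-- `α_s`: overwrite `α` by `s` on `{0,…,n-1}`. -/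
def modifySeq (X : ℕ → Type) (n : ℕ) (s α : ∀ i, X i) : ∀ i, X i :=
  fun i => if i < n then s i else α i

/-- `add(d⁰(V))`: the least cardinality of a subfamily of `d⁰(V)` whose union
is not in `d⁰(V)`. -/
noncomputable def addd0 (X : ℕ → Type) : Cardinal :=
  sInf {c | ∃ G : Set (Set (∀ i, X i)), G ⊆ d0 (treeV X) ∧ ⋃₀ G ∉ d0 (treeV X) ∧ c = #G}

/-- Two members of `V*` are compatible if their intersection contains a member of `V*`. -/
def compat (X : ℕ → Type) (U W : Set (∀ i, X i)) : Prop :=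
  ∃ S ∈ treeVstar X, S ⊆ U ∩ W

/-- A `v`-partition: a maximal family of pairwise incompatible members of `V*`. -/
def vPartition (X : ℕ → Type) (P : Set (Set (∀ i, X i))) : Prop :=
  P ⊆ treeVstar X ∧ (P.Pairwise fun U W => ¬ compat X U W) ∧
    ∀ W ∈ treeVstar X, ∃ U ∈ P, compat X U W

theorem stmt18 (X : ℕ → Type) [∀ i, Countable (X i)] [∀ i, Nontrivial (X i)]
    (P : Set (Set (∀ i, X i))) (hP : vPartition X P) :
    (Set.univ \ ⋃₀ P) ∈ d0 (treeVstar X) := by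
  intro W hW
  obtain ⟨Q, hQP, S, hS, hSsub⟩ := hP.2.2 W hW
  refine ⟨S, hS, fun x hx => (hSsub hx).2, ?_⟩
  ext x
  simp only [Set.mem_inter_iff, Set.mem_diff, Set.mem_univ, true_and,
    Set.mem_empty_iff_false, iff_false, not_and, not_not]
  intro hxS
  exact ⟨Q, hQP, (hSsub hxS).1⟩
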